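/- Lovász–Winkler criterion: let S be a stopping time of a finite irreducible Markov chain started from μ with P_μ(X_S ∈ ·) = ρ. Then S attains the minimum expectation among all stopping times with terminal distribution ρ started from μ if and only if S has a halting state, i.e., a state z with exit frequency ν_z = E_μ[∑_{k=0}^{S−1} 1(X_k = z)] = 0. -/

import Mathlib

open scoped BigOperators ENNReal

noncomputable section

/-- Total variation distance between two distributions on a finite set,
as half the `ℓ¹` distance. -/
def tv {S : Type*} [Fintype S] (μ ν : S → ℝ) : ℝ := (1 / 2) * ∑ y, |μ y - ν y|

/-- Law of the chain with transition matrix `P` started at `x`, evaluated at an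
independent random time with distribution `T` on ℕ. -/
def lawAt {S : Type*} [Fintype S] [DecidableEq S] (P : Matrix S S ℝ) (T : ℕ → ℝ)
    (x : S) : S → ℝ :=
  fun y => ∑' n, T n * (P ^ n) x y

/-- The geometric distribution on `{1,2,...}` with mean `t` (success probability `1/t`). -/
def geo (t : ℕ) : ℕ → ℝ :=
  fun n => if n = 0 then 0 else (1 / (t : ℝ)) * (1 - 1 / (t : ℝ)) ^ (n - 1)

/-- A (randomized) stopping time for the chain with transition matrix `P` started from
distribution `μ`, encoded by the vectors `θ t x = ℙ(X_t = x, S ≥ t)` and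
`σ t x = ℙ(X_t = x, S = t)` (Baxter–Chacon / filling-rule representation). -/
structure StoppingRule {S : Type*} [Fintype S] (P : Matrix S S ℝ) (μ : S → ℝ) where
  θ : ℕ → S → ℝ
  σ : ℕ → S → ℝ
  σ_nonneg : ∀ t x, 0 ≤ σ t x
  σ_le : ∀ t x, σ t x ≤ θ t x
  θ_zero : ∀ x, θ 0 x = μ x
  θ_succ : ∀ t y, θ (t + 1) y = ∑ x, (θ t x - σ t x) * P x y

/-- Expectation of a stopping rule, `E[S] = ∑_t t · ℙ(S = t)`. -/
def stopExp {S : Type*} [Fintype S] {P : Matrix S S ℝ} {μ : S → ℝ}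
    (R : StoppingRule P μ) : ℝ≥0∞ :=
  ∑' t : ℕ, (t : ℝ≥0∞) * ENNReal.ofReal (∑ x, R.σ t x)

/-- The stopping rule stops at a state distributed according to `π`. -/
def IsStat {S : Type*} [Fintype S] {P : Matrix S S ℝ} {μ : S → ℝ}
    (R : StoppingRule P μ) (π : S → ℝ) : Prop :=
  ∀ y, ∑' t, R.σ t y = π y

/-- `t_stop`: the maximum over starting states of the minimal expected value of a
stationary (randomized) stopping time. -/
def tstop {S : Type*} [Fintype S] [DecidableEq S] (P : Matrix S S ℝ) (π : S → ℝ) : ℝ≥0∞ :=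
  ⨆ x : S, ⨅ R : {R : StoppingRule P (fun y => if y = x then (1 : ℝ) else 0) // IsStat R π},
    stopExp R.1

namespace LW

set_option linter.unusedSectionVars false

variable {S : Type*} [Fintype S] [DecidableEq S] {P : Matrix S S ℝ} {μ : S → ℝ}

theorem theta_nonneg (hP0 : ∀ x y, 0 ≤ P x y) (hμ0 : ∀ x, 0 ≤ μ x)
    (R : StoppingRule P μ) : ∀ t x, 0 ≤ R.θ t x := by
  intro t
  induction t with
  | zero => intro x; rw [R.θ_zero]; exact hμ0 x
  | succ t ih =>
      intro y; rw [R.θ_succ]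
      exact Finset.sum_nonneg fun x _ =>
        mul_nonneg (sub_nonneg.2 (R.σ_le t x)) (hP0 x y)

/-- total mass still running -/
def Th (R : StoppingRule P μ) : ℕ → ℝ := fun t => ∑ x, R.θ t x
/-- stopping mass at time t -/
def am (R : StoppingRule P μ) : ℕ → ℝ := fun t => ∑ x, R.σ t x

theorem Th_zero (hμ1 : ∑ x, μ x = 1) (R : StoppingRule P μ) : Th R 0 = 1 := by
  simp only [Th]; simp only [R.θ_zero]; exact hμ1

theorem Th_succ (hP1 : ∀ x, ∑ y, P x y = 1) (R : StoppingRule P μ) :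
    ∀ t, Th R (t + 1) = Th R t - am R t := by
  intro t
  simp only [Th, am]
  simp only [R.θ_succ]
  rw [Finset.sum_comm, ← Finset.sum_sub_distrib]
  congr 1; ext x
  rw [← Finset.mul_sum, hP1 x, mul_one]

theorem am_nonneg (R : StoppingRule P μ) : ∀ t, 0 ≤ am R t :=
  fun t => Finset.sum_nonneg fun x _ => R.σ_nonneg t x

theorem Th_nonneg (hP0 : ∀ x y, 0 ≤ P x y) (hμ0 : ∀ x, 0 ≤ μ x)
    (R : StoppingRule P μ) : ∀ t, 0 ≤ Th R t :=
  fun t => Finset.sum_nonneg fun x _ => theta_nonneg hP0 hμ0 R t x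

theorem sum_am_range (hP1 : ∀ x, ∑ y, P x y = 1) (hμ1 : ∑ x, μ x = 1)
    (R : StoppingRule P μ) : ∀ n, ∑ t ∈ Finset.range n, am R t = 1 - Th R n := by
  intro n
  induction n with
  | zero => simp [Th_zero hμ1 R]
  | succ n ih => rw [Finset.sum_range_succ, ih, Th_succ hP1 R]; ring

theorem summable_sigma (hP0 : ∀ x y, 0 ≤ P x y) (hP1 : ∀ x, ∑ y, P x y = 1)
    (hμ0 : ∀ x, 0 ≤ μ x) (hμ1 : ∑ x, μ x = 1)
    (R : StoppingRule P μ) (y : S) : Summable (fun t => R.σ t y) := by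
  apply summable_of_sum_range_le (c := 1) (fun t => R.σ_nonneg t y)
  intro n
  calc ∑ t ∈ Finset.range n, R.σ t y ≤ ∑ t ∈ Finset.range n, am R t := by
        apply Finset.sum_le_sum; intro t _
        exact Finset.single_le_sum (f := fun x => R.σ t x) (fun x _ => R.σ_nonneg t x) (Finset.mem_univ y)
    _ = 1 - Th R n := sum_am_range hP1 hμ1 R n
    _ ≤ 1 := by linarith [Th_nonneg hP0 hμ0 R n]

theorem summable_am (hP0 : ∀ x y, 0 ≤ P x y) (hP1 : ∀ x, ∑ y, P x y = 1)
    (hμ0 : ∀ x, 0 ≤ μ x) (hμ1 : ∑ x, μ x = 1)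
    (R : StoppingRule P μ) : Summable (am R) := by
  apply summable_of_sum_range_le (c := 1) (am_nonneg R)
  intro n; rw [sum_am_range hP1 hμ1 R n]; linarith [Th_nonneg hP0 hμ0 R n]

theorem tsum_am_eq_one (hP0 : ∀ x y, 0 ≤ P x y) (hP1 : ∀ x, ∑ y, P x y = 1)
    (hμ0 : ∀ x, 0 ≤ μ x) (hμ1 : ∑ x, μ x = 1) {ρ : S → ℝ} (hρ1 : ∑ x, ρ x = 1)
    (R : StoppingRule P μ) (hterm : ∀ y, ∑' t, R.σ t y = ρ y) :
    ∑' t, am R t = 1 := by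
  unfold am
  rw [Summable.tsum_finsetSum (fun y _ => summable_sigma hP0 hP1 hμ0 hμ1 R y)]
  rw [← hρ1]
  exact Finset.sum_congr rfl fun y _ => hterm y

/-- `Th n` is the tail of the `am` series (given total mass stops). -/
theorem Th_eq_tail (hP0 : ∀ x y, 0 ≤ P x y) (hP1 : ∀ x, ∑ y, P x y = 1)
    (hμ0 : ∀ x, 0 ≤ μ x) (hμ1 : ∑ x, μ x = 1)
    (R : StoppingRule P μ) (hsum1 : ∑' t, am R t = 1) (n : ℕ) :
    Th R n = ∑' t, (if n ≤ t then am R t else 0) := by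
  have hsum := summable_am hP0 hP1 hμ0 hμ1 R
  have hsplit : ∀ t, am R t = (if n ≤ t then am R t else 0) + (if t < n then am R t else 0) := by
    intro t; by_cases h : n ≤ t
    · simp [h, Nat.not_lt.2 h]
    · simp [h, Nat.lt_of_not_le h]
  have h1 : Summable (fun t => if n ≤ t then am R t else 0) := by
    apply Summable.of_nonneg_of_le (fun t => ?_) (fun t => ?_) hsum
    · by_cases h : n ≤ t <;> simp [h, am_nonneg R t]
    · by_cases h : n ≤ t <;> simp [h, am_nonneg R t]
  have h2 : (∑' t, (if t < n then am R t else 0)) = 1 - Th R n := by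
    rw [tsum_eq_sum (s := Finset.range n) (fun t ht => by
      simp [Finset.mem_range] at ht; simp [Nat.not_lt.2 ht])]
    rw [← sum_am_range hP1 hμ1 R n]
    exact Finset.sum_congr rfl fun t ht => by simp [Finset.mem_range.1 ht]
  have h3 : (∑' t, am R t) = (∑' t, (if n ≤ t then am R t else 0)) + (∑' t, (if t < n then am R t else 0)) := by
    rw [← Summable.tsum_add h1 (by
      apply (summable_of_ne_finset_zero (s := Finset.range n))
      intro t ht; simp [Finset.mem_range] at ht; simp [Nat.not_lt.2 ht])]
    exact tsum_congr hsplit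
  rw [hsum1, h2] at h3
  linarith

theorem tsum_ite_lt (t : ℕ) (c : ℝ≥0∞) : ∑' k : ℕ, (if k < t then c else 0) = t * c := by
  rw [tsum_eq_sum (s := Finset.range t) (fun k hk => by
    simp [Finset.mem_range] at hk; simp [Nat.not_lt.2 hk])]
  rw [Finset.sum_ite_of_true (fun k hk => Finset.mem_range.1 hk)]
  simp [Finset.sum_const]

/-- Master formula: `E[S] = ∑_{k} P(S ≥ k+1)`. -/
theorem stopExp_eq_tsum_Th (hP0 : ∀ x y, 0 ≤ P x y) (hP1 : ∀ x, ∑ y, P x y = 1)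
    (hμ0 : ∀ x, 0 ≤ μ x) (hμ1 : ∑ x, μ x = 1)
    (R : StoppingRule P μ) (hsum1 : ∑' t, am R t = 1) :
    stopExp R = ∑' k : ℕ, ENNReal.ofReal (Th R (k + 1)) := by
  have hsum := summable_am hP0 hP1 hμ0 hμ1 R
  have key : ∀ k : ℕ, ENNReal.ofReal (Th R (k + 1))
      = ∑' t : ℕ, (if k < t then ENNReal.ofReal (am R t) else 0) := by
    intro k
    rw [Th_eq_tail hP0 hP1 hμ0 hμ1 R hsum1 (k + 1)]
    rw [ENNReal.ofReal_tsum_of_nonneg (fun t => by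
        by_cases h : k + 1 ≤ t <;> simp [h, am_nonneg R t])
      (by
        apply Summable.of_nonneg_of_le (fun t => ?_) (fun t => ?_) hsum
        · by_cases h : k + 1 ≤ t <;> simp [h, am_nonneg R t]
        · by_cases h : k + 1 ≤ t <;> simp [h, am_nonneg R t])]
    apply tsum_congr; intro t
    by_cases h : k + 1 ≤ t
    · simp [h, Nat.lt_iff_add_one_le.2 h]
    · have : ¬ k < t := fun hc => h (Nat.lt_iff_add_one_le.1 hc)
      simp [h, this]
  calc stopExp R = ∑' t : ℕ, (t : ℝ≥0∞) * ENNReal.ofReal (am R t) := rfl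
    _ = ∑' t : ℕ, ∑' k : ℕ, (if k < t then ENNReal.ofReal (am R t) else 0) := by
        exact tsum_congr fun t => (tsum_ite_lt t _).symm
    _ = ∑' k : ℕ, ∑' t : ℕ, (if k < t then ENNReal.ofReal (am R t) else 0) :=
        ENNReal.tsum_comm
    _ = ∑' k : ℕ, ENNReal.ofReal (Th R (k + 1)) := tsum_congr fun k => (key k).symm

/-- finiteness of `stopExp` gives summability of `Th`. -/
theorem summable_Th_of_fin (hP0 : ∀ x y, 0 ≤ P x y) (hP1 : ∀ x, ∑ y, P x y = 1)
    (hμ0 : ∀ x, 0 ≤ μ x) (hμ1 : ∑ x, μ x = 1)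
    (R : StoppingRule P μ) (hsum1 : ∑' t, am R t = 1) (hfin : stopExp R ≠ ⊤) :
    Summable (Th R) := by
  rw [stopExp_eq_tsum_Th hP0 hP1 hμ0 hμ1 R hsum1] at hfin
  have : Summable (fun k => Th R (k + 1)) := by
    have h0 : ∀ k : ℕ, ENNReal.ofReal (Th R (k+1)) = ((Th R (k+1)).toNNReal : ℝ≥0∞) := fun k => rfl
    rw [funext h0] at hfin
    have := ENNReal.tsum_coe_ne_top_iff_summable.1 hfin
    have h2 : (fun k => Th R (k+1)) = fun k => ((Th R (k+1)).toNNReal : ℝ) := by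
      ext k; rw [Real.coe_toNNReal _ (Th_nonneg hP0 hμ0 R (k+1))]
    rw [h2]
    exact_mod_cast NNReal.summable_coe.2 this
  exact (summable_nat_add_iff 1).1 this

theorem stopExp_eq_ofReal (hP0 : ∀ x y, 0 ≤ P x y) (hP1 : ∀ x, ∑ y, P x y = 1)
    (hμ0 : ∀ x, 0 ≤ μ x) (hμ1 : ∑ x, μ x = 1)
    (R : StoppingRule P μ) (hsum1 : ∑' t, am R t = 1) (hTh : Summable (Th R)) :
    stopExp R = ENNReal.ofReal (∑' k : ℕ, Th R (k + 1)) := by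
  rw [stopExp_eq_tsum_Th hP0 hP1 hμ0 hμ1 R hsum1]
  rw [ENNReal.ofReal_tsum_of_nonneg (fun k => Th_nonneg hP0 hμ0 R (k+1))
    ((summable_nat_add_iff 1).2 hTh)]

section exitfreq
variable (hP0 : ∀ x y, 0 ≤ P x y) (hP1 : ∀ x, ∑ y, P x y = 1)
  (hμ0 : ∀ x, 0 ≤ μ x) (hμ1 : ∑ x, μ x = 1)
/-- exit frequencies -/
def nu (R : StoppingRule P μ) : S → ℝ := fun y => ∑' t, (R.θ t y - R.σ t y)

theorem nu_nonneg (R : StoppingRule P μ) (y : S) : 0 ≤ nu R y :=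
  tsum_nonneg fun t => sub_nonneg.2 (R.σ_le t y)

include hP0 hP1 hμ0 hμ1

theorem summable_theta (R : StoppingRule P μ) (hTh : Summable (Th R)) (y : S) :
    Summable (fun t => R.θ t y) := by
  apply summable_of_sum_range_le (c := ∑' t, Th R t) (fun t => theta_nonneg hP0 hμ0 R t y)
  intro n
  calc ∑ t ∈ Finset.range n, R.θ t y ≤ ∑ t ∈ Finset.range n, Th R t := by
        apply Finset.sum_le_sum; intro t _
        exact Finset.single_le_sum (f := fun x => R.θ t x)
          (fun x _ => theta_nonneg hP0 hμ0 R t x) (Finset.mem_univ y)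
    _ ≤ ∑' t, Th R t := Summable.sum_le_tsum _ (fun t _ => Th_nonneg hP0 hμ0 R t) hTh

theorem summable_diff (R : StoppingRule P μ) (hTh : Summable (Th R)) (y : S) :
    Summable (fun t => R.θ t y - R.σ t y) :=
  (summable_theta hP0 hP1 hμ0 hμ1 R hTh y).sub (summable_sigma hP0 hP1 hμ0 hμ1 R y)

theorem sum_nu (R : StoppingRule P μ) (hTh : Summable (Th R)) (hsum1 : ∑' t, am R t = 1) :
    ∑ y, nu R y = ∑' k : ℕ, Th R (k + 1) := by
  unfold nu
  rw [← Summable.tsum_finsetSum (fun y _ => summable_diff hP0 hP1 hμ0 hμ1 R hTh y)]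
  apply tsum_congr; intro t
  rw [Finset.sum_sub_distrib]
  rw [Th_succ hP1 R t]; rfl

theorem tsum_theta_eq (R : StoppingRule P μ) (hTh : Summable (Th R)) (y : S) :
    ∑' t, R.θ t y = μ y + ∑ x, nu R x * P x y := by
  rw [Summable.tsum_eq_zero_add (summable_theta hP0 hP1 hμ0 hμ1 R hTh y), R.θ_zero y]
  congr 1
  have : ∀ t : ℕ, R.θ (t + 1) y = ∑ x, (R.θ t x - R.σ t x) * P x y := fun t => R.θ_succ t y
  rw [tsum_congr this]
  rw [Summable.tsum_finsetSum (fun x _ => (summable_diff hP0 hP1 hμ0 hμ1 R hTh x).mul_right (P x y))]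
  exact Finset.sum_congr rfl fun x _ => by
    rw [tsum_mul_right]; rfl

theorem conservation (R : StoppingRule P μ) (hTh : Summable (Th R)) (y : S) :
    nu R y + (∑' t, R.σ t y) = μ y + ∑ x, nu R x * P x y := by
  rw [← tsum_theta_eq hP0 hP1 hμ0 hμ1 R hTh y]
  show (∑' t, (R.θ t y - R.σ t y)) + (∑' t, R.σ t y) = _
  rw [← Summable.tsum_add (summable_diff hP0 hP1 hμ0 hμ1 R hTh y) (summable_sigma hP0 hP1 hμ0 hμ1 R y)]
  exact tsum_congr fun t => by ring

end exitfreq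

section irred

theorem pow_nonneg_entry (hP0 : ∀ x y, 0 ≤ P x y) : ∀ (n : ℕ) x y, 0 ≤ (P ^ n) x y := by
  intro n
  induction n with
  | zero => intro x y; by_cases h : x = y <;> simp [pow_zero, Matrix.one_apply, h]
  | succ n ih =>
      intro x y
      rw [pow_succ, Matrix.mul_apply]
      exact Finset.sum_nonneg fun z _ => mul_nonneg (ih x z) (hP0 z y)

theorem left_fixed_pow {e : S → ℝ} (he : ∀ y, ∑ x, e x * P x y = e y) :
    ∀ (n : ℕ) y, ∑ x, e x * (P ^ n) x y = e y := by
  intro n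
  induction n with
  | zero => intro y; simp [pow_zero, Matrix.one_apply]
  | succ n ih =>
      intro y
      have h1 : ∀ x, (P ^ (n+1)) x y = ∑ z, (P ^ n) x z * P z y := by
        intro x; rw [pow_succ, Matrix.mul_apply]
      simp only [h1, Finset.mul_sum, ← mul_assoc]
      rw [Finset.sum_comm]
      have h2 : ∀ z, ∑ x, e x * (P ^ n) x z * P z y = e z * P z y := by
        intro z
        rw [← Finset.sum_mul (f := fun x => e x * (P ^ n) x z), ih z]
      rw [Finset.sum_congr rfl (fun z _ => h2 z)]
      exact he y

theorem fixed_nonneg_eq_zero (hP0 : ∀ x y, 0 ≤ P x y) (hirr : ∀ x y, ∃ n, 0 < (P ^ n) x y)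
    {e : S → ℝ} (he0 : ∀ y, 0 ≤ e y) (he : ∀ y, ∑ x, e x * P x y = e y)
    {x0 : S} (hx0 : e x0 = 0) : ∀ x, e x = 0 := by
  intro x
  obtain ⟨n, hn⟩ := hirr x x0
  have h := left_fixed_pow he n x0
  rw [hx0] at h
  have hterms : ∀ z ∈ Finset.univ, 0 ≤ e z * (P ^ n) z x0 := fun z _ =>
    mul_nonneg (he0 z) (pow_nonneg_entry hP0 n z x0)
  have := (Finset.sum_eq_zero_iff_of_nonneg hterms).1 h x (Finset.mem_univ x)
  rcases mul_eq_zero.1 this with h' | h'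
  · exact h'
  · exact absurd h' (ne_of_gt hn)

theorem pi_pos (hP0 : ∀ x y, 0 ≤ P x y) {π : S → ℝ} (hirr : ∀ x y, ∃ n, 0 < (P ^ n) x y)
    (hπ0 : ∀ x, 0 ≤ π x) (hπ1 : ∑ x, π x = 1)
    (hπP : ∀ y, ∑ x, π x * P x y = π y) : ∀ y, 0 < π y := by
  intro y
  obtain ⟨x, hx⟩ : ∃ x, 0 < π x := by
    by_contra h
    push_neg at h
    have : ∑ x, π x ≤ 0 := Finset.sum_nonpos fun x _ => h x
    rw [hπ1] at this; linarith
  obtain ⟨n, hn⟩ := hirr x y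
  have h := left_fixed_pow hπP n y
  have : π x * (P ^ n) x y ≤ π y := by
    rw [← h]
    apply Finset.single_le_sum (f := fun z => π z * (P ^ n) z y)
      (fun z _ => mul_nonneg (hπ0 z) (pow_nonneg_entry hP0 n z y)) (Finset.mem_univ x)
  exact lt_of_lt_of_le (mul_pos hx hn) this

theorem fixed_eq_smul_pi (hP0 : ∀ x y, 0 ≤ P x y) (hirr : ∀ x y, ∃ n, 0 < (P ^ n) x y)
    {π : S → ℝ} (hπ0 : ∀ x, 0 ≤ π x) (hπ1 : ∑ x, π x = 1)
    (hπP : ∀ y, ∑ x, π x * P x y = π y)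
    {d : S → ℝ} (hd : ∀ y, ∑ x, d x * P x y = d y) :
    ∀ y, d y = (∑ x, d x) * π y := by
  have hSne : Nonempty S := by
    by_contra h
    rw [not_nonempty_iff] at h
    rw [Finset.univ_eq_empty, Finset.sum_empty] at hπ1
    norm_num at hπ1
  haveI := hSne
  have hπpos := pi_pos hP0 hirr hπ0 hπ1 hπP
  obtain ⟨xs, _, hxs⟩ := Finset.exists_min_image Finset.univ (fun x => d x / π x)
    (Finset.univ_nonempty)
  set c := d xs / π xs with hc
  set e : S → ℝ := fun y => d y - c * π y with he
  have he0 : ∀ y, 0 ≤ e y := by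
    intro y
    have := hxs y (Finset.mem_univ y)
    rw [div_le_div_iff₀ (hπpos xs) (hπpos y)] at this
    have : c * π y ≤ d y := by
      rw [hc, div_mul_eq_mul_div, div_le_iff₀ (hπpos xs)]
      linarith [this]
    simp only [he]; linarith
  have hefix : ∀ y, ∑ x, e x * P x y = e y := by
    intro y
    simp only [he]
    simp only [sub_mul, Finset.sum_sub_distrib]
    rw [hd y]
    congr 1
    simp only [mul_assoc]
    rw [← Finset.mul_sum, hπP y]
  have hexs : e xs = 0 := by
    simp only [he, hc]
    rw [div_mul_cancel₀ _ (ne_of_gt (hπpos xs))]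
    ring
  have hz := fixed_nonneg_eq_zero hP0 hirr he0 hefix hexs
  have hdc : ∀ y, d y = c * π y := by
    intro y; have := hz y; simp only [he] at this; linarith
  have hsum : ∑ x, d x = c := by
    rw [Finset.sum_congr rfl (fun x _ => hdc x), ← Finset.mul_sum, hπ1, mul_one]
  intro y; rw [hsum, hdc y]

end irred

section construct

/-- candidate θ sequence for the rule stopping at `x` with probability `1 - q x` per visit -/
def thetaC (P : Matrix S S ℝ) (μ : S → ℝ) (q : S → ℝ) : ℕ → S → ℝ
  | 0 => μ
  | (t+1) => fun y => ∑ x, (thetaC P μ q t x * q x) * P x y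

theorem exists_rule (hP0 : ∀ x y, 0 ≤ P x y) (hP1 : ∀ x, ∑ y, P x y = 1)
    (hirr : ∀ x y, ∃ n, 0 < (P ^ n) x y)
    (hμ0 : ∀ x, 0 ≤ μ x) (hμ1 : ∑ x, μ x = 1)
    {ρ : S → ℝ} (hρ0 : ∀ x, 0 ≤ ρ x) (hρ1 : ∑ x, ρ x = 1)
    {ν' : S → ℝ} (hν'0 : ∀ x, 0 ≤ ν' x)
    (hcons : ∀ y, ν' y + ρ y = μ y + ∑ x, ν' x * P x y) :
    ∃ R' : StoppingRule P μ, (∀ y, ∑' t, R'.σ t y = ρ y) ∧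
      stopExp R' = ENNReal.ofReal (∑ x, ν' x) := by
  classical
  set β : S → ℝ := fun x => ν' x + ρ x with hβ
  set p : S → ℝ := fun x => if β x = 0 then 1 else ρ x / β x with hp
  set q : S → ℝ := fun x => 1 - p x with hq
  have hβ0 : ∀ x, 0 ≤ β x := fun x => add_nonneg (hν'0 x) (hρ0 x)
  have hρβ : ∀ x, ρ x ≤ β x := fun x => by simp only [hβ]; linarith [hν'0 x]
  have hp0 : ∀ x, 0 ≤ p x := by
    intro x; simp only [hp]
    by_cases h : β x = 0
    · simp [h]
    · simp only [h, if_false]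
      exact div_nonneg (hρ0 x) (hβ0 x)
  have hp1 : ∀ x, p x ≤ 1 := by
    intro x; simp only [hp]
    by_cases h : β x = 0
    · simp [h]
    · simp only [h, if_false]
      rw [div_le_one (lt_of_le_of_ne (hβ0 x) (Ne.symm h))]
      exact hρβ x
  have hq0 : ∀ x, 0 ≤ q x := fun x => by simp only [hq]; linarith [hp1 x]
  have hq1 : ∀ x, q x ≤ 1 := fun x => by simp only [hq]; linarith [hp0 x]
  have hβq : ∀ x, β x * q x = ν' x := by
    intro x; simp only [hq, hp]
    by_cases h : β x = 0
    · have h1 : ν' x = 0 := by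
        have := hρ0 x; have := hν'0 x
        have hx : ν' x + ρ x = 0 := h
        linarith
      simp [h, h1]
    · rw [mul_sub, mul_one, if_neg h, mul_comm (β x) (ρ x / β x), div_mul_cancel₀ _ h]
      simp only [hβ]; ring
  have hβp : ∀ x, β x * p x = ρ x := by
    intro x; simp only [hp]
    by_cases h : β x = 0
    · have h1 : ρ x = 0 := by
        have := hρ0 x; have := hν'0 x
        have hx : ν' x + ρ x = 0 := h
        linarith
      simp [h, h1]
    · rw [if_neg h, mul_comm (β x) (ρ x / β x), div_mul_cancel₀ _ h]
  set θ' : ℕ → S → ℝ := thetaC P μ q with hθ'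
  have hθ'0 : ∀ x, θ' 0 x = μ x := fun x => rfl
  have hθ'succ : ∀ t y, θ' (t+1) y = ∑ x, (θ' t x * q x) * P x y := fun t y => rfl
  have hθ'nn : ∀ t x, 0 ≤ θ' t x := by
    intro t
    induction t with
    | zero => intro x; rw [hθ'0]; exact hμ0 x
    | succ t ih =>
        intro y; rw [hθ'succ]
        exact Finset.sum_nonneg fun x _ =>
          mul_nonneg (mul_nonneg (ih x) (hq0 x)) (hP0 x y)
  -- partial sums bounded by β
  have hM : ∀ n y, ∑ t ∈ Finset.range n, θ' t y ≤ β y := by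
    intro n
    induction n with
    | zero => intro y; simp [hβ0 y]
    | succ n ih =>
        intro y
        rw [Finset.sum_range_succ']
        simp only [hθ'succ, hθ'0]
        have hswap : ∑ t ∈ Finset.range n, ∑ x, (θ' t x * q x) * P x y
            = ∑ x, (∑ t ∈ Finset.range n, θ' t x) * (q x * P x y) := by
          rw [Finset.sum_comm]
          exact Finset.sum_congr rfl fun x _ => by
            rw [Finset.sum_mul]
            exact Finset.sum_congr rfl fun t _ => by ring
        rw [hswap]
        have hbd : ∑ x, (∑ t ∈ Finset.range n, θ' t x) * (q x * P x y)
            ≤ ∑ x, ν' x * P x y := by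
          apply Finset.sum_le_sum
          intro x _
          calc (∑ t ∈ Finset.range n, θ' t x) * (q x * P x y)
              ≤ β x * (q x * P x y) := by
                apply mul_le_mul_of_nonneg_right (ih x)
                exact mul_nonneg (hq0 x) (hP0 x y)
            _ = ν' x * P x y := by rw [← mul_assoc, hβq x]
        have := hcons y
        have hβy : β y = μ y + ∑ x, ν' x * P x y := this
        linarith
  -- summability and the fixed point
  have hθ'sum : ∀ y, Summable (fun t => θ' t y) := by
    intro y
    exact summable_of_sum_range_le (c := β y) (fun t => hθ'nn t y) (fun n => hM n y)
  set m' : S → ℝ := fun y => ∑' t, θ' t y with hm'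
  have hm'le : ∀ y, m' y ≤ β y := fun y =>
    Summable.tsum_le_of_sum_range_le (hθ'sum y) (fun n => hM n y)
  have hm'rec : ∀ y, m' y = μ y + ∑ x, (m' x * q x) * P x y := by
    intro y
    simp only [hm']
    rw [Summable.tsum_eq_zero_add (hθ'sum y), hθ'0]
    congr 1
    have h1 : ∀ t : ℕ, θ' (t+1) y = ∑ x, (θ' t x * q x) * P x y := fun t => hθ'succ t y
    rw [tsum_congr h1]
    rw [Summable.tsum_finsetSum (fun x _ => by
      have : Summable (fun t => θ' t x * (q x * P x y)) := (hθ'sum x).mul_right _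
      exact this.congr (fun t => by ring))]
    exact Finset.sum_congr rfl fun x _ => by
      have : (∑' t, (θ' t x * q x) * P x y) = (∑' t, θ' t x * (q x * P x y)) :=
        tsum_congr fun t => by ring
      rw [this, tsum_mul_right, ← mul_assoc]
  -- e := β - m' is nonneg and subinvariant; show it is 0
  set e : S → ℝ := fun y => β y - m' y with he
  have he0 : ∀ y, 0 ≤ e y := fun y => by simp only [he]; linarith [hm'le y]
  have hefix : ∀ y, e y = ∑ x, (e x * q x) * P x y := by
    intro y
    have hβy : β y = μ y + ∑ x, (β x * q x) * P x y := by
      simp only [hβq]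
      exact hcons y
    have hC : ∑ x, ((β x - m' x) * q x) * P x y
        = (∑ x, (β x * q x) * P x y) - ∑ x, (m' x * q x) * P x y := by
      rw [← Finset.sum_sub_distrib]
      exact Finset.sum_congr rfl fun x _ => by ring
    show β y - m' y = ∑ x, ((β x - m' x) * q x) * P x y
    rw [hC, hβy, hm'rec y]
    ring
  have hele : ∀ y, e y ≤ ∑ x, e x * P x y := by
    intro y
    rw [hefix y]
    apply Finset.sum_le_sum
    intro x _
    have : e x * q x ≤ e x := by
      nlinarith [he0 x, hq1 x, hq0 x]
    exact mul_le_mul_of_nonneg_right this (hP0 x y)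
  have hsums : ∑ y, (∑ x, e x * P x y) = ∑ y, e y := by
    rw [Finset.sum_comm]
    exact Finset.sum_congr rfl fun x _ => by rw [← Finset.mul_sum, hP1 x, mul_one]
  have heeq : ∀ y, e y = ∑ x, e x * P x y := by
    have := (Finset.sum_eq_sum_iff_of_le (fun y _ => hele y)).1 (by rw [hsums])
    exact fun y => this y (Finset.mem_univ y)
  -- at states where ρ > 0, e vanishes
  have hex0 : ∀ x, ρ x > 0 → e x = 0 := by
    intro x hx
    have hpx : 0 < p x := by
      have hβx : 0 < β x := lt_of_lt_of_le hx (hρβ x)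
      simp only [hp, if_neg (ne_of_gt hβx)]
      positivity
    -- ∑_x e x * p x * P x y = 0 for each y
    obtain ⟨y, hy⟩ : ∃ y, 0 < P x y := by
      by_contra h
      push_neg at h
      have : ∑ y, P x y ≤ 0 := Finset.sum_nonpos fun y _ => h y
      rw [hP1 x] at this; linarith
    have hzero : ∑ z, (e z * p z) * P z y = 0 := by
      have h1 := heeq y
      have h2 := hefix y
      have : ∑ z, e z * P z y - ∑ z, (e z * q z) * P z y = 0 := by linarith
      rw [← Finset.sum_sub_distrib] at this
      rw [← this]
      apply Finset.sum_congr rfl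
      intro z _
      simp only [hq]; ring
    have hterms : ∀ z ∈ Finset.univ, 0 ≤ (e z * p z) * P z y := fun z _ =>
      mul_nonneg (mul_nonneg (he0 z) (hp0 z)) (hP0 z y)
    have := (Finset.sum_eq_zero_iff_of_nonneg hterms).1 hzero x (Finset.mem_univ x)
    rcases mul_eq_zero.1 this with h' | h'
    · rcases mul_eq_zero.1 h' with h'' | h''
      · exact h''
      · exact absurd h'' (ne_of_gt hpx)
    · exact absurd h' (ne_of_gt hy)
  obtain ⟨x0, hx0⟩ : ∃ x0, 0 < ρ x0 := by
    by_contra h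
    push_neg at h
    have : ∑ x, ρ x ≤ 0 := Finset.sum_nonpos fun x _ => h x
    rw [hρ1] at this; linarith
  have hezero : ∀ x, e x = 0 :=
    fixed_nonneg_eq_zero hP0 hirr he0 (fun y => (heeq y).symm) (hex0 x0 hx0)
  have hm'β : ∀ y, m' y = β y := by
    intro y; have := hezero y; simp only [he] at this; linarith
  -- build the rule
  have hσnn : ∀ (t : ℕ) (x : S), 0 ≤ p x * θ' t x :=
    fun t x => mul_nonneg (hp0 x) (hθ'nn t x)
  have hσle : ∀ (t : ℕ) (x : S), p x * θ' t x ≤ θ' t x :=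
    fun t x => mul_le_of_le_one_left (hθ'nn t x) (hp1 x)
  have hθs : ∀ (t : ℕ) (y : S), θ' (t + 1) y = ∑ x, (θ' t x - p x * θ' t x) * P x y := by
    intro t y
    rw [hθ'succ t y]
    exact Finset.sum_congr rfl fun x _ => by simp only [hq]; ring
  set R' : StoppingRule P μ := ⟨θ', fun t x => p x * θ' t x, hσnn, hσle, hθ'0, hθs⟩ with hR'
  have hterm' : ∀ y, ∑' t, R'.σ t y = ρ y := by
    intro y
    show (∑' t, p y * θ' t y) = ρ y
    rw [tsum_mul_left]
    show p y * m' y = ρ y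
    rw [hm'β y, mul_comm, hβp y]
  refine ⟨R', hterm', ?_⟩
  have hThsum : Summable (Th R') := by
    have : Th R' = fun t => ∑ x, θ' t x := rfl
    rw [this]
    exact summable_sum (fun x _ => hθ'sum x)
  have hsum1 : ∑' t, am R' t = 1 := tsum_am_eq_one hP0 hP1 hμ0 hμ1 hρ1 R' hterm'
  rw [stopExp_eq_ofReal hP0 hP1 hμ0 hμ1 R' hsum1 hThsum]
  congr 1
  rw [← sum_nu hP0 hP1 hμ0 hμ1 R' hThsum hsum1]
  apply Finset.sum_congr rfl
  intro y _
  have h1 : nu R' y = ∑' t, θ' t y * q y := by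
    unfold nu
    exact tsum_congr fun t => by
      show θ' t y - p y * θ' t y = θ' t y * q y
      simp only [hq]; ring
  rw [h1, tsum_mul_right]
  show m' y * q y = ν' y
  rw [hm'β y, hβq y]

end construct

end LW

/-- Lovász–Winkler: a stopping time `S` of a finite irreducible chain
started from `μ` with terminal distribution `ρ` and finite expectation is
mean-optimal (its expectation equals the infimum over all stopping times from `μ`
with terminal distribution `ρ`) if and only if it has a halting state, i.e. a state
`z` with exit frequency `ν_z = ∑_t (θ_t(z) − σ_t(z)) = 0`. -/
theorem claim_lovasz_winkler {S : Type*} [Fintype S] [DecidableEq S]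
    (P : Matrix S S ℝ) (π : S → ℝ)
    (hP0 : ∀ x y, 0 ≤ P x y) (hP1 : ∀ x, ∑ y, P x y = 1)
    (hirr : ∀ x y, ∃ n, 0 < (P ^ n) x y)
    (hπ0 : ∀ x, 0 ≤ π x) (hπ1 : ∑ x, π x = 1)
    (hπP : ∀ y, ∑ x, π x * P x y = π y)
    (μ ρ : S → ℝ)
    (hμ0 : ∀ x, 0 ≤ μ x) (hμ1 : ∑ x, μ x = 1)
    (hρ0 : ∀ x, 0 ≤ ρ x) (hρ1 : ∑ x, ρ x = 1)
    (R : StoppingRule P μ)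
    (hterm : ∀ y, ∑' t, R.σ t y = ρ y)
    (hfin : stopExp R ≠ ⊤) :
    stopExp R
        = (⨅ R' : {R' : StoppingRule P μ // ∀ y, ∑' t, R'.σ t y = ρ y}, stopExp R'.1)
      ↔ ∃ z, (∑' t, (R.θ t z - R.σ t z)) = 0 := by
  classical
  have hSne : Nonempty S := by
    by_contra h
    rw [not_nonempty_iff] at h
    rw [Finset.univ_eq_empty, Finset.sum_empty] at hμ1
    norm_num at hμ1
  haveI := hSne
  have hπpos := LW.pi_pos hP0 hirr hπ0 hπ1 hπP
  have hsum1 : ∑' t, LW.am R t = 1 := LW.tsum_am_eq_one hP0 hP1 hμ0 hμ1 hρ1 R hterm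
  have hTh : Summable (LW.Th R) := LW.summable_Th_of_fin hP0 hP1 hμ0 hμ1 R hsum1 hfin
  have hconsR : ∀ y, LW.nu R y + ρ y = μ y + ∑ x, LW.nu R x * P x y := by
    intro y
    rw [← hterm y]
    exact LW.conservation hP0 hP1 hμ0 hμ1 R hTh y
  have hER : stopExp R = ENNReal.ofReal (∑ y, LW.nu R y) := by
    rw [LW.stopExp_eq_ofReal hP0 hP1 hμ0 hμ1 R hsum1 hTh,
      LW.sum_nu hP0 hP1 hμ0 hμ1 R hTh hsum1]
  constructor
  · -- optimal → halting state
    intro hopt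
    by_contra hno
    push_neg at hno
    have hνpos : ∀ z, 0 < LW.nu R z := fun z =>
      lt_of_le_of_ne (LW.nu_nonneg R z) (Ne.symm (hno z))
    obtain ⟨xs, _, hxs⟩ := Finset.exists_min_image Finset.univ
      (fun x => LW.nu R x / π x) (Finset.univ_nonempty)
    set c := LW.nu R xs / π xs with hc
    have hcpos : 0 < c := div_pos (hνpos xs) (hπpos xs)
    set ν' : S → ℝ := fun y => LW.nu R y - c * π y with hν'
    have hν'0 : ∀ y, 0 ≤ ν' y := by
      intro y
      have h := hxs y (Finset.mem_univ y)
      rw [div_le_div_iff₀ (hπpos xs) (hπpos y)] at h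
      have : c * π y ≤ LW.nu R y := by
        rw [hc, div_mul_eq_mul_div, div_le_iff₀ (hπpos xs)]
        linarith
      simp only [hν']; linarith
    have hcons' : ∀ y, ν' y + ρ y = μ y + ∑ x, ν' x * P x y := by
      intro y
      simp only [hν']
      have hsplit : ∑ x, (LW.nu R x - c * π x) * P x y
          = (∑ x, LW.nu R x * P x y) - c * ∑ x, π x * P x y := by
        rw [Finset.mul_sum, ← Finset.sum_sub_distrib]
        exact Finset.sum_congr rfl fun x _ => by ring
      rw [hsplit, hπP y]
      have := hconsR y
      linarith
    obtain ⟨R'', hterm'', hE''⟩ :=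
      LW.exists_rule hP0 hP1 hirr hμ0 hμ1 hρ0 hρ1 hν'0 hcons'
    have hsum' : ∑ x, ν' x = (∑ x, LW.nu R x) - c := by
      simp only [hν']
      rw [Finset.sum_sub_distrib, ← Finset.mul_sum, hπ1, mul_one]
    have hlt : stopExp R'' < stopExp R := by
      rw [hE'', hER, hsum']
      apply ENNReal.ofReal_lt_ofReal_iff_of_nonneg (by
        rw [← hsum']; exact Finset.sum_nonneg fun x _ => hν'0 x) |>.2
      linarith
    have hle : (⨅ R' : {R' : StoppingRule P μ // ∀ y, ∑' t, R'.σ t y = ρ y}, stopExp R'.1)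
        ≤ stopExp R'' := iInf_le (fun R' : {R' : StoppingRule P μ // ∀ y, ∑' t, R'.σ t y = ρ y} => stopExp R'.1) ⟨R'', hterm''⟩
    rw [← hopt] at hle
    exact absurd (lt_of_le_of_lt hle hlt) (lt_irrefl _)
  · -- halting state → optimal
    rintro ⟨z, hz⟩
    have hνz : LW.nu R z = 0 := hz
    apply le_antisymm
    · apply le_iInf
      rintro ⟨R', hterm'⟩
      by_cases hfin' : stopExp R' = ⊤
      · rw [hfin']; exact le_top
      have hsum1' : ∑' t, LW.am R' t = 1 := LW.tsum_am_eq_one hP0 hP1 hμ0 hμ1 hρ1 R' hterm'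
      have hTh' : Summable (LW.Th R') := LW.summable_Th_of_fin hP0 hP1 hμ0 hμ1 R' hsum1' hfin'
      have hconsR' : ∀ y, LW.nu R' y + ρ y = μ y + ∑ x, LW.nu R' x * P x y := by
        intro y
        rw [← hterm' y]
        exact LW.conservation hP0 hP1 hμ0 hμ1 R' hTh' y
      set d : S → ℝ := fun y => LW.nu R' y - LW.nu R y with hd
      have hdfix : ∀ y, ∑ x, d x * P x y = d y := by
        intro y
        simp only [hd]
        have hsplit : ∑ x, (LW.nu R' x - LW.nu R x) * P x y
            = (∑ x, LW.nu R' x * P x y) - ∑ x, LW.nu R x * P x y := by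
          rw [← Finset.sum_sub_distrib]
          exact Finset.sum_congr rfl fun x _ => by ring
        rw [hsplit]
        have h1 := hconsR y; have h2 := hconsR' y
        linarith
      have hdpi := LW.fixed_eq_smul_pi hP0 hirr hπ0 hπ1 hπP hdfix
      have hdz : 0 ≤ d z := by
        simp only [hd]; rw [hνz, sub_zero]; exact LW.nu_nonneg R' z
      have hsumd : 0 ≤ ∑ x, d x := by
        have := hdpi z
        nlinarith [hπpos z]
      have hE' : stopExp R' = ENNReal.ofReal (∑ y, LW.nu R' y) := by
        rw [LW.stopExp_eq_ofReal hP0 hP1 hμ0 hμ1 R' hsum1' hTh',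
          LW.sum_nu hP0 hP1 hμ0 hμ1 R' hTh' hsum1']
      rw [hER, hE']
      apply ENNReal.ofReal_le_ofReal
      have : ∑ y, LW.nu R' y - ∑ y, LW.nu R y = ∑ x, d x := by
        rw [← Finset.sum_sub_distrib]
      linarith
    · exact iInf_le (fun R' : {R' : StoppingRule P μ // ∀ y, ∑' t, R'.σ t y = ρ y} => stopExp R'.1) ⟨R, hterm⟩
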